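/- Let Λ be an even unimodular hyperbolic lattice of rank 26, let S be a primitive hyperbolic sublattice of Λ, and let R be the orthogonal complement of S in Λ, assumed negative definite. Let w ∈ Λ be a nonzero primitive vector with w² = 0, and suppose that the orthogonal projection w_S of w to S⊗ℚ satisfies (w_S)² = 0. Then w ∈ S, and R embeds isometrically into the lattice ⟨w⟩⊥/⟨w⟩, the quotient of the orthogonal complement of w in Λ by ℤw with the induced bilinear form. In particular, if R cannot be embedded into ⟨w⟩⊥/⟨w⟩ (e.g. if ⟨w⟩⊥/⟨w⟩ has no vectors of norm −2 but R does), then (w_S)² > 0. -/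

import Mathlib

namespace K3Aut

variable {n : ℕ}

/-- The real symmetric bilinear pairing on `L ⊗ ℝ = ℝⁿ` determined by an
integral Gram matrix `B`. -/
def pair (B : Matrix (Fin n) (Fin n) ℤ) (x y : Fin n → ℝ) : ℝ :=
  ∑ i, ∑ j, x i * (B i j : ℝ) * y j

/-- `x` is a point of the lattice `L` (integer coordinates). -/
def isLat (x : Fin n → ℝ) : Prop := ∀ i, ∃ k : ℤ, x i = (k : ℝ)

/-- `x` has rational coordinates (a point of `L ⊗ ℚ`). -/
def isRatPt (x : Fin n → ℝ) : Prop := ∀ i, ∃ q : ℚ, x i = (q : ℝ)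

/-- `x` is a point of the dual lattice `L∨ ⊆ L ⊗ ℚ`. -/
def isDual (B : Matrix (Fin n) (Fin n) ℤ) (x : Fin n → ℝ) : Prop :=
  isRatPt x ∧ ∀ y : Fin n → ℝ, isLat y → ∃ k : ℤ, pair B x y = (k : ℝ)

/-- The Gram matrix `B` is symmetric, nondegenerate and even. -/
def IsEvenLat (B : Matrix (Fin n) (Fin n) ℤ) : Prop :=
  B.IsSymm ∧ B.det ≠ 0 ∧ ∀ i, Even (B i i)

/-- The form restricted to the subspace `W` is nondegenerate with exactly one
positive direction, i.e. of signature `(1, dim W - 1)`. -/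
def IsHypOn (B : Matrix (Fin n) (Fin n) ℤ) (W : Submodule ℝ (Fin n → ℝ)) : Prop :=
  (∃ x ∈ W, 0 < pair B x x) ∧
  (∀ x ∈ W, ∀ y ∈ W, 0 < pair B x x → 0 < pair B y y →
      pair B x x * pair B y y ≤ pair B x y ^ 2) ∧
  (∀ x ∈ W, (∀ y ∈ W, pair B x y = 0) → x = 0)

/-- The lattice is hyperbolic: rank `n > 1` and signature `(1, n-1)`. -/
def IsHyperbolic (B : Matrix (Fin n) (Fin n) ℤ) : Prop :=
  1 < n ∧ IsHypOn B ⊤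

/-- `P` is a positive cone: a connected component of the set of positive-norm
vectors of `L ⊗ ℝ`. -/
def IsPosCone (B : Matrix (Fin n) (Fin n) ℤ) (P : Set (Fin n → ℝ)) : Prop :=
  ∃ x, 0 < pair B x x ∧ P = connectedComponentIn {y | 0 < pair B y y} x

/-- The hyperplane `(v)⊥` of `P`. -/
def perp (B : Matrix (Fin n) (Fin n) ℤ) (P : Set (Fin n → ℝ)) (v : Fin n → ℝ) :
    Set (Fin n → ℝ) := {x ∈ P | pair B x v = 0}

/-- `V ⊆ {v ∈ L∨ : v² < 0}`. -/
def DualNeg (B : Matrix (Fin n) (Fin n) ℤ) (V : Set (Fin n → ℝ)) : Prop :=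
  ∀ v ∈ V, isDual B v ∧ pair B v v < 0

/-- Condition [V1]: the norms of the vectors of `V` are bounded. -/
def CondV1 (B : Matrix (Fin n) (Fin n) ℤ) (V : Set (Fin n → ℝ)) : Prop :=
  ∃ c : ℝ, 0 < c ∧ ∀ v ∈ V, -pair B v v < c

/-- The cone `Σ_L(Δ)`. -/
def SigmaCone (B : Matrix (Fin n) (Fin n) ℤ) (Δ : Set (Fin n → ℝ)) :
    Set (Fin n → ℝ) :=
  {x | ∀ v ∈ Δ, 0 ≤ pair B x v}

/-- `D` is a `V*`-chamber: the closure in `P` of a connected component of the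
complement in `P` of the hyperplanes `(v)⊥`, `v ∈ V`. -/
def IsChamber (B : Matrix (Fin n) (Fin n) ℤ) (P V D : Set (Fin n → ℝ)) : Prop :=
  ∃ x ∈ P, (∀ v ∈ V, pair B x v ≠ 0) ∧
    D = closure (connectedComponentIn {y ∈ P | ∀ v ∈ V, pair B y v ≠ 0} x) ∩ P

/-- `Δ` is a defining set of the chamber `D`. -/
def IsDefSet (B : Matrix (Fin n) (Fin n) ℤ) (P Δ D : Set (Fin n → ℝ)) : Prop :=
  (∀ v ∈ Δ, isDual B v ∧ pair B v v < 0) ∧ D = SigmaCone B Δ ∩ P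

/-- Condition [V3]: every `V*`-chamber has a finite defining set. -/
def CondV3 (B : Matrix (Fin n) (Fin n) ℤ) (P V : Set (Fin n → ℝ)) : Prop :=
  ∀ D, IsChamber B P V D → ∃ Δ : Set (Fin n → ℝ), Δ.Finite ∧ IsDefSet B P Δ D

/-- Condition [V4]: every boundary point of a `V*`-chamber is rational, i.e.
every nonzero norm-zero vector of the closure of a chamber is a positive real
multiple of a rational vector. -/
def CondV4 (B : Matrix (Fin n) (Fin n) ℤ) (P V : Set (Fin n → ℝ)) : Prop :=
  ∀ D, IsChamber B P V D → ∀ x ∈ closure D, x ≠ 0 → pair B x x = 0 →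
    ∃ t : ℝ, 0 < t ∧ ∃ y, isRatPt y ∧ x = t • y

/-- The action of `GL_n(ℤ)` on `L ⊗ ℝ`. -/
def act (g : (Matrix (Fin n) (Fin n) ℤ)ˣ) (x : Fin n → ℝ) : Fin n → ℝ :=
  ((g : Matrix (Fin n) (Fin n) ℤ).map ((↑) : ℤ → ℝ)).mulVec x

/-- `g` is an isometry of `L` preserving the positive cone `P`,
i.e. an element of `O⁺(L)`. -/
def InOPlus (B : Matrix (Fin n) (Fin n) ℤ) (P : Set (Fin n → ℝ))
    (g : (Matrix (Fin n) (Fin n) ℤ)ˣ) : Prop :=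
  (g : Matrix (Fin n) (Fin n) ℤ).transpose * B * (g : Matrix (Fin n) (Fin n) ℤ) = B ∧
    act g '' P = P

/-- Condition [V2]: `V` is invariant under the action of `G`. -/
def CondV2 (G : Subgroup ((Matrix (Fin n) (Fin n) ℤ)ˣ)) (V : Set (Fin n → ℝ)) : Prop :=
  ∀ g ∈ G, ∀ v ∈ V, act g v ∈ V

/-- `(v)⊥` is a wall of the chamber `D`: it is disjoint from the interior of `D`
and `(v)⊥ ∩ D` contains a nonempty open subset of `(v)⊥`. -/
def IsWall (B : Matrix (Fin n) (Fin n) ℤ) (P : Set (Fin n → ℝ)) (v : Fin n → ℝ)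
    (D : Set (Fin n → ℝ)) : Prop :=
  pair B v v < 0 ∧ perp B P v ∩ interior D = ∅ ∧
  ∃ W : Set (Fin n → ℝ), IsOpen W ∧ (W ∩ perp B P v).Nonempty ∧ W ∩ perp B P v ⊆ D

/-- `D'` is the chamber adjacent to `D` across the wall `(v)⊥`. -/
def IsAdjacent (B : Matrix (Fin n) (Fin n) ℤ) (P V : Set (Fin n → ℝ))
    (D : Set (Fin n → ℝ)) (v : Fin n → ℝ) (D' : Set (Fin n → ℝ)) : Prop :=
  IsChamber B P V D' ∧ D' ≠ D ∧
  ∃ W : Set (Fin n → ℝ), IsOpen W ∧ (W ∩ perp B P v).Nonempty ∧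
    W ∩ perp B P v ⊆ D ∩ D'

/-- `S` is (the set of real points of) a primitive sublattice of `L`. -/
def IsPrimSub (S : Submodule ℤ (Fin n → ℝ)) : Prop :=
  (∀ x ∈ S, isLat x) ∧
  ∀ x : Fin n → ℝ, isLat x → ∀ k : ℤ, k ≠ 0 → (k : ℝ) • x ∈ S → x ∈ S

/-- `xS` is the orthogonal projection of `x` to `S ⊗ ℚ`. -/
def IsProjS (B : Matrix (Fin n) (Fin n) ℤ) (S : Submodule ℤ (Fin n → ℝ))
    (xS x : Fin n → ℝ) : Prop :=
  xS ∈ Submodule.span ℚ (S : Set (Fin n → ℝ)) ∧ ∀ s ∈ S, pair B (x - xS) s = 0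

/-- The orthogonal complement `R = S⊥ ∩ L` of `S` in `L`. -/
def orthCompl (B : Matrix (Fin n) (Fin n) ℤ) (S : Submodule ℤ (Fin n → ℝ)) :
    Set (Fin n → ℝ) :=
  {x | isLat x ∧ ∀ s ∈ S, pair B x s = 0}

/-- `P` is a positive cone of the subspace `W`. -/
def IsPosConeIn (B : Matrix (Fin n) (Fin n) ℤ) (W : Set (Fin n → ℝ))
    (P : Set (Fin n → ℝ)) : Prop :=
  ∃ x ∈ W, 0 < pair B x x ∧ P = connectedComponentIn {y ∈ W | 0 < pair B y y} x



section Aux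

variable {n : ℕ}

lemma pair_add_right (B : Matrix (Fin n) (Fin n) ℤ) (x y z : Fin n → ℝ) :
    pair B x (y + z) = pair B x y + pair B x z := by
  simp only [pair, Pi.add_apply, ← Finset.sum_add_distrib]
  exact Finset.sum_congr rfl fun i _ => Finset.sum_congr rfl fun j _ => by ring

lemma pair_smul_right (B : Matrix (Fin n) (Fin n) ℤ) (c : ℝ) (x y : Fin n → ℝ) :
    pair B x (c • y) = c * pair B x y := by
  simp only [pair, Pi.smul_apply, smul_eq_mul, Finset.mul_sum]
  exact Finset.sum_congr rfl fun i _ => Finset.sum_congr rfl fun j _ => by ring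

lemma pair_add_left (B : Matrix (Fin n) (Fin n) ℤ) (x y z : Fin n → ℝ) :
    pair B (x + y) z = pair B x z + pair B y z := by
  simp only [pair, Pi.add_apply, ← Finset.sum_add_distrib]
  exact Finset.sum_congr rfl fun i _ => Finset.sum_congr rfl fun j _ => by ring

lemma pair_smul_left (B : Matrix (Fin n) (Fin n) ℤ) (c : ℝ) (x y : Fin n → ℝ) :
    pair B (c • x) y = c * pair B x y := by
  simp only [pair, Pi.smul_apply, smul_eq_mul, Finset.mul_sum]
  exact Finset.sum_congr rfl fun i _ => Finset.sum_congr rfl fun j _ => by ring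

lemma pair_sub_right (B : Matrix (Fin n) (Fin n) ℤ) (x y z : Fin n → ℝ) :
    pair B x (y - z) = pair B x y - pair B x z := by
  have := pair_add_right B x (y - z) z
  simp only [sub_add_cancel] at this
  linarith

lemma pair_sub_left (B : Matrix (Fin n) (Fin n) ℤ) (x y z : Fin n → ℝ) :
    pair B (x - y) z = pair B x z - pair B y z := by
  have := pair_add_left B (x - y) y z
  simp only [sub_add_cancel] at this
  linarith

lemma pair_symm {B : Matrix (Fin n) (Fin n) ℤ} (hB : B.IsSymm) (x y : Fin n → ℝ) :
    pair B x y = pair B y x := by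
  rw [pair, pair, Finset.sum_comm]
  refine Finset.sum_congr rfl fun j _ => Finset.sum_congr rfl fun i _ => ?_
  rw [← hB.apply i j]
  ring

/-- The rational pairing. -/
def pairQ (B : Matrix (Fin n) (Fin n) ℤ) (x y : Fin n → ℚ) : ℚ :=
  ∑ i, ∑ j, x i * (B i j : ℚ) * y j

/-- The rational pairing as a bilinear form over `ℚ`. -/
def bqForm (B : Matrix (Fin n) (Fin n) ℤ) : LinearMap.BilinForm ℚ (Fin n → ℚ) :=
  LinearMap.mk₂ ℚ (pairQ B)
    (fun x y z => by
      simp only [pairQ, Pi.add_apply, ← Finset.sum_add_distrib]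
      exact Finset.sum_congr rfl fun i _ => Finset.sum_congr rfl fun j _ => by ring)
    (fun c x y => by
      simp only [pairQ, Pi.smul_apply, smul_eq_mul, Finset.mul_sum]
      exact Finset.sum_congr rfl fun i _ => Finset.sum_congr rfl fun j _ => by ring)
    (fun x y z => by
      simp only [pairQ, Pi.add_apply, ← Finset.sum_add_distrib]
      exact Finset.sum_congr rfl fun i _ => Finset.sum_congr rfl fun j _ => by ring)
    (fun c x y => by
      simp only [pairQ, Pi.smul_apply, smul_eq_mul, Finset.mul_sum]
      exact Finset.sum_congr rfl fun i _ => Finset.sum_congr rfl fun j _ => by ring)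

@[simp] lemma bqForm_apply (B : Matrix (Fin n) (Fin n) ℤ) (x y : Fin n → ℚ) :
    bqForm B x y = pairQ B x y := rfl

lemma pairQ_symm {B : Matrix (Fin n) (Fin n) ℤ} (hB : B.IsSymm) (x y : Fin n → ℚ) :
    pairQ B x y = pairQ B y x := by
  rw [pairQ, pairQ, Finset.sum_comm]
  refine Finset.sum_congr rfl fun j _ => Finset.sum_congr rfl fun i _ => ?_
  rw [← hB.apply i j]
  ring

/-- The canonical `ℚ`-linear map `ℚⁿ → ℝⁿ`. -/
def eQR : (Fin n → ℚ) →ₗ[ℚ] (Fin n → ℝ) where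
  toFun x := fun i => (x i : ℝ)
  map_add' x y := by funext i; simp
  map_smul' q x := by
    funext i
    simp only [Pi.smul_apply, smul_eq_mul, RingHom.id_apply, Rat.cast_mul]
    rw [← Rat.cast_smul_eq_qsmul (R := ℝ) q]
    simp [Rat.smul_def]

@[simp] lemma eQR_apply (x : Fin n → ℚ) (i : Fin n) : (eQR x) i = (x i : ℝ) := rfl

lemma eQR_inj {x : Fin n → ℚ} (h : eQR x = 0) : x = 0 := by
  funext i
  have : ((x i : ℝ)) = 0 := congrFun h i
  exact_mod_cast this

lemma pair_eQR (B : Matrix (Fin n) (Fin n) ℤ) (x y : Fin n → ℚ) :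
    pair B (eQR x) (eQR y) = (pairQ B x y : ℝ) := by
  simp [pair, pairQ]

lemma den_mul_self (q : ℚ) : (q.den : ℚ) * q = (q.num : ℚ) := by
  have h : (q.den : ℚ) ≠ 0 := by exact_mod_cast q.den_ne_zero
  have h2 := Rat.num_div_den q
  rw [div_eq_iff h] at h2
  rw [h2]; ring

end Aux

/-- Let `Λ` be an even unimodular hyperbolic lattice of rank
`26`, `S` a primitive hyperbolic sublattice with negative-definite orthogonal
complement `R`.  Let `w ∈ Λ` be a nonzero primitive isotropic vector with
`(w_S)² = 0`.  Then `w ∈ S` and `R` embeds isometrically into `⟨w⟩⊥/⟨w⟩`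
(the embedding being given by a lift `ψ` with values in `⟨w⟩⊥ ⊆ Λ`, additive
and injective modulo `ℤw`, preserving the induced form). -/
theorem statement_12 (B : Matrix (Fin 26) (Fin 26) ℤ)
    (hB : IsEvenLat B) (huni : IsUnit B.det) (hhyp : IsHyperbolic B)
    (S : Submodule ℤ (Fin 26 → ℝ)) (hSprim : IsPrimSub S)
    (hShyp : IsHypOn B (Submodule.span ℝ (S : Set (Fin 26 → ℝ))))
    (hRneg : ∀ x : Fin 26 → ℝ, isLat x → (∀ s ∈ S, pair B x s = 0) → x ≠ 0 →
      pair B x x < 0)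
    (w : Fin 26 → ℝ) (hw : isLat w) (hw0 : w ≠ 0)
    (hwprim : ∀ x : Fin 26 → ℝ, isLat x → ∀ k : ℤ, (k : ℝ) • x = w → IsUnit k)
    (hww : pair B w w = 0)
    (hwS : ∀ wS, IsProjS B S wS w → pair B wS wS = 0) :
    w ∈ S ∧
    ∃ ψ : (Fin 26 → ℝ) → (Fin 26 → ℝ),
      (∀ x ∈ orthCompl B S, isLat (ψ x) ∧ pair B (ψ x) w = 0) ∧
      (∀ x ∈ orthCompl B S, ∀ y ∈ orthCompl B S,
        ∃ k : ℤ, ψ (x + y) = ψ x + ψ y + (k : ℝ) • w) ∧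
      (∀ x ∈ orthCompl B S, ∀ y ∈ orthCompl B S,
        pair B (ψ x) (ψ y) = pair B x y) ∧
      (∀ x ∈ orthCompl B S, (∃ k : ℤ, ψ x = (k : ℝ) • w) → x = 0) := by
  obtain ⟨hsymm, hdet, heven⟩ := hB
  classical
  set pre : Set (Fin 26 → ℚ) := eQR ⁻¹' (S : Set (Fin 26 → ℝ)) with hpre
  set W : Submodule ℚ (Fin 26 → ℚ) := Submodule.span ℚ pre with hWdef
  have hrefl : (bqForm B).IsRefl := by
    intro x y h
    rw [bqForm_apply, pairQ_symm hsymm]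
    exact h
  have hSrat : ∀ s ∈ S, ∃ y ∈ pre, eQR y = s := by
    intro s hs
    have hy : eQR (fun i => ((hSprim.1 s hs i).choose : ℚ)) = s := by
      funext i
      have hsp := (hSprim.1 s hs i).choose_spec
      exact_mod_cast hsp.symm
    refine ⟨_, ?_, hy⟩
    show eQR _ ∈ (S : Set (Fin 26 → ℝ))
    rw [hy]; exact hs
  have hQR : ∀ v ∈ Submodule.span ℚ (S : Set (Fin 26 → ℝ)),
      v ∈ Submodule.span ℝ (S : Set (Fin 26 → ℝ)) := by
    intro v hv
    exact Submodule.span_le_restrictScalars ℚ ℝ (S : Set (Fin 26 → ℝ)) hv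
  have hWim : ∀ p ∈ W, eQR p ∈ Submodule.span ℚ (S : Set (Fin 26 → ℝ)) := by
    intro p hp
    have hle : Submodule.map eQR W ≤ Submodule.span ℚ (S : Set (Fin 26 → ℝ)) := by
      rw [hWdef, Submodule.map_span]
      apply Submodule.span_mono
      rintro _ ⟨y, hy, rfl⟩
      exact hy
    exact hle ⟨p, hp, rfl⟩
  have pair_span : ∀ u : Fin 26 → ℝ, (∀ s ∈ S, pair B u s = 0) →
      ∀ z ∈ Submodule.span ℝ (S : Set (Fin 26 → ℝ)), pair B u z = 0 := by
    intro u hu z hz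
    induction hz using Submodule.span_induction with
    | mem x hx => exact hu x hx
    | zero => simp [pair]
    | add x y _ _ hx hy => rw [pair_add_right, hx, hy, add_zero]
    | smul a x _ hx => rw [pair_smul_right, hx, mul_zero]
  have pair_spanQ : ∀ u : Fin 26 → ℝ, (∀ s ∈ S, pair B u s = 0) →
      ∀ z ∈ Submodule.span ℚ (S : Set (Fin 26 → ℝ)), pair B u z = 0 := by
    intro u hu z hz
    induction hz using Submodule.span_induction with
    | mem x hx => exact hu x hx
    | zero => simp [pair]
    | add x y _ _ hx hy => rw [pair_add_right, hx, hy, add_zero]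
    | smul a x _ hx =>
        rw [← Rat.cast_smul_eq_qsmul ℝ a x, pair_smul_right, hx, mul_zero]
  have hnd : ((bqForm B).restrict W).Nondegenerate := by
    refine (hrefl.domRestrict W).nondegenerate_iff_separatingLeft.2 ?_
    intro x hx
    have hxS : ∀ s ∈ S, pair B (eQR (x : Fin 26 → ℚ)) s = 0 := by
      intro s hs
      obtain ⟨y, hy, rfl⟩ := hSrat s hs
      rw [pair_eQR]
      have h0 : pairQ B (x : Fin 26 → ℚ) y = 0 := hx ⟨y, Submodule.subset_span hy⟩
      rw [h0]; simp
    have hx0 : eQR (x : Fin 26 → ℚ) = 0 :=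
      hShyp.2.2 _ (hQR _ (hWim _ x.2)) (pair_span _ hxS)
    exact Subtype.ext (eQR_inj hx0)
  have hcompl := (bqForm B).isCompl_orthogonal_of_restrict_nondegenerate hrefl hnd
  set wq : Fin 26 → ℚ := fun i => ((hw i).choose : ℚ) with hwqdef
  have hewq : eQR wq = w := by
    funext i
    have hsp := (hw i).choose_spec
    exact_mod_cast hsp.symm
  have hsup : wq ∈ W ⊔ (bqForm B).orthogonal W := by
    rw [hcompl.sup_eq_top]; trivial
  obtain ⟨p, hp, q, hq, hpq⟩ := Submodule.mem_sup.1 hsup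
  set wS := eQR p with hwSdef
  have hwq' : w - wS = eQR q := by
    rw [← hewq, ← hpq, map_add]; abel
  have hperp : ∀ s ∈ S, pair B (w - wS) s = 0 := by
    intro s hs
    obtain ⟨y, hy, rfl⟩ := hSrat s hs
    rw [hwq', pair_eQR]
    have h1 : pairQ B y q = 0 := hq y (Submodule.subset_span hy)
    rw [pairQ_symm hsymm, h1]; simp
  have hproj : IsProjS B S wS w := ⟨hWim p hp, hperp⟩
  have h0 : pair B wS wS = 0 := hwS wS hproj
  have hA : pair B (w - wS) wS = 0 := pair_spanQ _ hperp wS (hWim p hp)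
  have hB2 : pair B wS (w - wS) = 0 := by rw [pair_symm hsymm]; exact hA
  have hqq : pair B (w - wS) (w - wS) = 0 := by
    have e1 := pair_add_left B (w - wS) wS w
    have e2 := pair_add_right B (w - wS) (w - wS) wS
    have e3 := pair_add_right B wS (w - wS) wS
    rw [sub_add_cancel] at e1 e2 e3
    rw [hww] at e1
    rw [hA] at e2
    rw [hB2, h0] at e3
    linarith
  have hclear : ∀ y : Fin 26 → ℚ, ∃ N : ℤ, 0 < N ∧ isLat (eQR ((N : ℚ) • y)) := by
    intro y
    have hex : ∀ N : ℤ, ∀ i : Fin 26, (((y i).den : ℤ) ∣ N) →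
        ∃ k : ℤ, ((N : ℚ) • y) i = (k : ℚ) := by
      intro N i ⟨c, hc⟩
      refine ⟨c * (y i).num, ?_⟩
      rw [Pi.smul_apply, smul_eq_mul, hc]
      push_cast
      calc ((y i).den : ℚ) * c * y i = (c : ℚ) * (((y i).den : ℚ) * y i) := by ring
        _ = c * (y i).num := by rw [den_mul_self]
    refine ⟨∏ i, ((y i).den : ℤ),
      Finset.prod_pos (fun i _ => by exact_mod_cast (y i).den_pos), fun i => ?_⟩
    obtain ⟨k, hk⟩ := hex _ i
      (Finset.dvd_prod_of_mem (fun j => ((y j).den : ℤ)) (Finset.mem_univ i))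
    exact ⟨k, by rw [eQR_apply, hk]; norm_cast⟩
  obtain ⟨N, hNpos, hNlat⟩ := hclear q
  have hNe : ((N : ℝ)) ≠ 0 := Int.cast_ne_zero.2 hNpos.ne'
  have heq2 : eQR ((N : ℚ) • q) = (N : ℝ) • eQR q := by
    rw [map_smul, ← Rat.cast_smul_eq_qsmul ℝ]
    norm_cast
    exact Int.cast_smul_eq_zsmul _ N (eQR q)
  have hqzero : eQR q = 0 := by
    by_contra hne
    have hx0 : eQR ((N : ℚ) • q) ≠ 0 := by
      rw [heq2]
      intro h
      rcases smul_eq_zero.1 h with h1 | h2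
      · exact hNe h1
      · exact hne h2
    have hxperp : ∀ s ∈ S, pair B (eQR ((N : ℚ) • q)) s = 0 := by
      intro s hs
      rw [heq2, pair_smul_left]
      have h1 : pair B (eQR q) s = 0 := by rw [← hwq']; exact hperp s hs
      rw [h1, mul_zero]
    have hxx : pair B (eQR ((N : ℚ) • q)) (eQR ((N : ℚ) • q)) = 0 := by
      rw [heq2, pair_smul_left, pair_smul_right]
      have h1 : pair B (eQR q) (eQR q) = 0 := by rw [← hwq']; exact hqq
      rw [h1]; ring
    have hlt := hRneg _ hNlat hxperp hx0
    rw [hxx] at hlt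
    exact lt_irrefl 0 hlt
  have hwwS : w = wS := by
    have h := hwq'
    rw [hqzero] at h
    exact sub_eq_zero.1 h
  have hwspan : w ∈ Submodule.span ℚ (S : Set (Fin 26 → ℝ)) := by
    rw [hwwS]; exact hWim p hp
  have hmulS : ∀ x : Fin 26 → ℝ, x ∈ Submodule.span ℚ (S : Set (Fin 26 → ℝ)) →
      ∃ m : ℤ, m ≠ 0 ∧ (m : ℝ) • x ∈ S := by
    intro x hx
    induction hx using Submodule.span_induction with
    | mem z hz => exact ⟨1, one_ne_zero, by simpa using hz⟩
    | zero => exact ⟨1, one_ne_zero, by simpa using S.zero_mem⟩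
    | add a b ha hb iha ihb =>
        obtain ⟨m1, hm1, h1⟩ := iha
        obtain ⟨m2, hm2, h2⟩ := ihb
        refine ⟨m1 * m2, mul_ne_zero hm1 hm2, ?_⟩
        have hsp : ((m1 * m2 : ℤ) : ℝ) • (a + b)
            = (m2 : ℝ) • ((m1 : ℝ) • a) + (m1 : ℝ) • ((m2 : ℝ) • b) := by
          rw [smul_add, smul_smul, smul_smul]
          push_cast; ring_nf
        rw [hsp]
        refine S.add_mem ?_ ?_
        · rw [Int.cast_smul_eq_zsmul ℝ m2]
          exact S.smul_mem _ h1
        · rw [Int.cast_smul_eq_zsmul ℝ m1]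
          exact S.smul_mem _ h2
    | smul a x hx ih =>
        obtain ⟨m, hm, hmem⟩ := ih
        refine ⟨(a.den : ℤ) * m,
          mul_ne_zero (by exact_mod_cast a.den_ne_zero) hm, ?_⟩
        have hds : ((a.den : ℝ)) * (a : ℝ) = (a.num : ℝ) := by
          exact_mod_cast congrArg (Rat.cast : ℚ → ℝ) (den_mul_self a)
        have key : (((a.den : ℤ) * m : ℤ) : ℝ) • (a • x)
            = (a.num : ℝ) • ((m : ℝ) • x) := by
          rw [← Rat.cast_smul_eq_qsmul ℝ a x, smul_smul, smul_smul]
          congr 1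
          push_cast
          linear_combination (m : ℝ) * hds
        rw [key, Int.cast_smul_eq_zsmul ℝ]
        exact S.smul_mem _ hmem
  obtain ⟨m, hm, hmS⟩ := hmulS w hwspan
  have hwmem : w ∈ S := hSprim.2 w hw m hm hmS
  refine ⟨hwmem, id, ?_, ?_, ?_, ?_⟩
  · intro x hx
    exact ⟨hx.1, hx.2 w hwmem⟩
  · intro x _ y _
    exact ⟨0, by simp⟩
  · intro x _ y _
    rfl
  · intro x hx hk
    obtain ⟨k, hkx⟩ := hk
    by_contra hne
    have hlt := hRneg x hx.1 hx.2 hne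
    have hz : pair B x x = 0 := by
      show pair B x x = 0
      have : pair B x x = pair B ((k : ℝ) • w) ((k : ℝ) • w) := by
        rw [← hkx]; rfl
      rw [this, pair_smul_left, pair_smul_right, hww]
      ring
    rw [hz] at hlt
    exact lt_irrefl 0 hlt

end K3Aut
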